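/- The graph G(m,n) is well-covered: every maximal independent set of G(m,n) has exactly m+n-1 vertices. -/

import Mathlib

/-- The graph `G(m,n)`: vertices are pairs `(i,j)` (0-indexed, corresponding to
`x_{i+1,j+1}`), and `x_{i,j} ~ x_{k,l}` iff (`i < k` and `j > l`) or (`i > k` and `j < l`). -/
def gridGraph (m n : ℕ) : SimpleGraph (Fin m × Fin n) where
  Adj u v := (u.1 < v.1 ∧ v.2 < u.2) ∨ (v.1 < u.1 ∧ u.2 < v.2)
  symm := ⟨fun u v h => Or.symm h⟩
  loopless := ⟨fun u h => by rcases h with ⟨h, -⟩ | ⟨h, -⟩ <;> exact absurd h (lt_irrefl _)⟩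

/-- `W` is an independent set of the induced subgraph of `G` on `A`. -/
def IndepOn {V : Type*} (G : SimpleGraph V) (A W : Set V) : Prop :=
  W ⊆ A ∧ ∀ u ∈ W, ∀ v ∈ W, ¬ G.Adj u v

/-- `W` is a maximal independent set of the induced subgraph of `G` on `A`. -/
def MaxIndepOn {V : Type*} (G : SimpleGraph V) (A W : Set V) : Prop :=
  IndepOn G A W ∧ ∀ W', IndepOn G A W' → W ⊆ W' → W' = W

/-- `G(m,n)` is well-covered: every maximal independent set has exactly
`m + n - 1` vertices. -/
theorem stmt1 (m n : ℕ) (hm : 1 ≤ m) (hn : 1 ≤ n)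
    (W : Set (Fin m × Fin n))
    (hW : MaxIndepOn (gridGraph m n) Set.univ W) :
    W.ncard = m + n - 1 := by
  obtain ⟨⟨hWsub, hWind⟩, hWmax⟩ := hW
  -- every vertex not in W is adjacent to some vertex in W
  have hblock : ∀ v : Fin m × Fin n, v ∉ W → ∃ w ∈ W, (gridGraph m n).Adj v w := by
    intro v hv
    by_contra h
    push_neg at h
    have heq : insert v W = W := by
      apply hWmax
      · refine ⟨Set.subset_univ _, ?_⟩
        intro a ha b hb
        rcases ha with rfl | ha
        · rcases hb with rfl | hb
          · exact (gridGraph m n).loopless.irrefl _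
          · exact h b hb
        · rcases hb with rfl | hb
          · intro hadj; exact h a ha hadj.symm
          · exact hWind a ha b hb
      · exact Set.subset_insert _ _
    exact hv (heq ▸ Set.mem_insert v W)
  -- injectivity of (i,j) ↦ i+j on W
  have hinj : Set.InjOn (fun p : Fin m × Fin n => (p.1 : ℕ) + (p.2 : ℕ)) W := by
    intro a ha b hb hab
    simp only at hab
    by_contra hne
    have hadj : (gridGraph m n).Adj a b := by
      have h1 : (a.1 : ℕ) ≠ (b.1 : ℕ) := by
        intro h
        apply hne
        have e1 : a.1 = b.1 := Fin.ext h
        have e2 : a.2 = b.2 := Fin.ext (by omega)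
        exact Prod.ext e1 e2
      rcases lt_or_gt_of_ne h1 with h | h
      · exact Or.inl ⟨Fin.lt_def.mpr h, Fin.lt_def.mpr (by omega)⟩
      · exact Or.inr ⟨Fin.lt_def.mpr h, Fin.lt_def.mpr (by omega)⟩
    exact hWind a ha b hb hadj
  -- surjectivity onto {0, ..., m+n-2}
  have hsurj : ∀ s, s < m + n - 1 → ∃ p ∈ W, (p.1 : ℕ) + (p.2 : ℕ) = s := by
    intro s hs
    by_contra hno
    push_neg at hno
    -- blocking info for diagonal vertices
    have hv : ∀ i, i < m → s - i < n → i ≤ s →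
        (∃ w ∈ W, i < (w.1 : ℕ) ∧ (w.2 : ℕ) < s - i) ∨
        (∃ w ∈ W, (w.1 : ℕ) < i ∧ s - i < (w.2 : ℕ)) := by
      intro i h1 h2 hsum
      have hvW : (⟨⟨i, h1⟩, ⟨s - i, h2⟩⟩ : Fin m × Fin n) ∉ W := by
        intro h
        exact hno _ h (by simp; omega)
      obtain ⟨w, hw, hadj⟩ := hblock _ hvW
      rcases hadj with ⟨ha, hb⟩ | ⟨ha, hb⟩
      · exact Or.inl ⟨w, hw, Fin.lt_def.mp ha, Fin.lt_def.mp hb⟩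
      · exact Or.inr ⟨w, hw, Fin.lt_def.mp ha, Fin.lt_def.mp hb⟩
    set i0 := s - (n - 1) with hi0
    set i1 := min s (m - 1) with hi1
    have hle : i0 ≤ i1 := by omega
    -- R holds along the diagonal
    have key : ∀ i, i0 ≤ i → i ≤ i1 → ∃ w ∈ W, i < (w.1 : ℕ) ∧ (w.2 : ℕ) < s - i := by
      intro i hge
      induction i, hge using Nat.le_induction with
      | base =>
        intro _
        rcases hv i0 (by omega) (by omega) (by omega) with h | ⟨w, hw, ha, hb⟩
        · exact h
        · have := w.1.isLt
          have := w.2.isLt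
          omega
      | succ i hge ih =>
        intro hle'
        obtain ⟨w, hw, hwa, hwb⟩ := ih (by omega)
        rcases hv (i + 1) (by omega) (by omega) (by omega) with h | ⟨w', hw', ha, hb⟩
        · exact h
        · exfalso
          have := w.1.isLt
          have := w.2.isLt
          have hadj : (gridGraph m n).Adj w' w :=
            Or.inl ⟨Fin.lt_def.mpr (by omega), Fin.lt_def.mpr (by omega)⟩
          exact hWind w' hw' w hw hadj
    obtain ⟨w, hw, ha, hb⟩ := key i1 hle le_rfl
    have := w.1.isLt
    have := w.2.isLt
    omega
  have himg : (fun p : Fin m × Fin n => (p.1 : ℕ) + (p.2 : ℕ)) '' W = Set.Iio (m + n - 1) := by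
    ext s
    simp only [Set.mem_image, Set.mem_Iio]
    constructor
    · rintro ⟨p, hp, rfl⟩
      have := p.1.isLt
      have := p.2.isLt
      omega
    · intro hs
      obtain ⟨p, hp, he⟩ := hsurj s hs
      exact ⟨p, hp, he⟩
  calc W.ncard = ((fun p : Fin m × Fin n => (p.1 : ℕ) + (p.2 : ℕ)) '' W).ncard :=
        (Set.ncard_image_of_injOn hinj).symm
    _ = (Set.Iio (m + n - 1)).ncard := by rw [himg]
    _ = m + n - 1 := by rw [← Finset.coe_range, Set.ncard_coe_finset, Finset.card_range]
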